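/- arXiv:2307.10273 — 4 statements merged into one kernel-verified Lean document; each statement's English description precedes it below -/
import Mathlib

section
/- Let n be a positive integer, ε > 0 with εn an integer satisfying εn ≤ n/2, and let X ~ HGeom(n, εn, εn). Then for all t > 0, P(X/n − ε² > t) ≤ exp(−min(t²·n/(4ε²), t·n/4)). -/
open Finset

set_option maxHeartbeats 1000000

-- Lemma A: (1-y) e^{2y} ≤ 1+y for y ≥ 0
lemma expAux (y : ℝ) (hy : 0 ≤ y) : (1 - y) * Real.exp (2 * y) ≤ 1 + y := by
  have key : ∀ x : ℝ, HasDerivAt (fun z : ℝ => (1 + z) - (1 - z) * Real.exp (2 * z))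
      (1 - (1 - 2 * x) * Real.exp (2 * x)) x := by
    intro x
    have h1 : HasDerivAt (fun z : ℝ => Real.exp (2 * z)) (2 * Real.exp (2 * x)) x := by
      simpa [mul_comm] using HasDerivAt.exp ((hasDerivAt_id x).const_mul 2)
    have h2 : HasDerivAt (fun z : ℝ => (1 - z) * Real.exp (2 * z))
        ((-1) * Real.exp (2 * x) + (1 - x) * (2 * Real.exp (2 * x))) x :=
      ((hasDerivAt_id x).const_sub 1).mul h1
    have h3 : HasDerivAt (fun z : ℝ => (1 + z) - (1 - z) * Real.exp (2 * z))
        (1 - ((-1) * Real.exp (2 * x) + (1 - x) * (2 * Real.exp (2 * x)))) x :=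
      ((hasDerivAt_id x).const_add 1).sub h2
    convert h3 using 1
    ring
  have mono : MonotoneOn (fun z : ℝ => (1 + z) - (1 - z) * Real.exp (2 * z)) (Set.Ici 0) := by
    apply monotoneOn_of_deriv_nonneg (convex_Ici 0)
    · exact ((continuous_const.add continuous_id).sub
        ((continuous_const.sub continuous_id).mul (Real.continuous_exp.comp
          (continuous_const.mul continuous_id)))).continuousOn
    · intro x hx
      exact (key x).differentiableAt.differentiableWithinAt
    · intro x hx
      rw [(key x).deriv]
      have hx' : (0:ℝ) < x := by simpa using hx
      have : 1 - 2 * x ≤ Real.exp (-(2*x)) := by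
        have := Real.add_one_le_exp (-(2*x)); linarith
      have hpos : 0 < Real.exp (2*x) := Real.exp_pos _
      have : (1 - 2*x) * Real.exp (2*x) ≤ 1 := by
        calc (1 - 2*x) * Real.exp (2*x) ≤ Real.exp (-(2*x)) * Real.exp (2*x) := by
              apply mul_le_mul_of_nonneg_right this hpos.le
          _ = 1 := by rw [← Real.exp_add]; simp
      linarith
  have h0 : (fun z : ℝ => (1 + z) - (1 - z) * Real.exp (2 * z)) 0 = 0 := by simp
  have := mono (Set.self_mem_Ici) (a := 0) (b := y) hy hy
  simp only [h0] at this
  linarith [this]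

-- b ≤ d·exp(−2(d−b)/S) for 0 < b < d, d+b ≤ S
lemma ratio_le_exp (b d S : ℝ) (hb : 0 < b) (hd : b < d) (hS : d + b ≤ S) :
    b ≤ d * Real.exp (-(2 * (d - b) / S)) := by
  have hdb : 0 < d + b := by linarith
  have hS0 : 0 < S := lt_of_lt_of_le hdb hS
  set y : ℝ := (d - b) / (d + b) with hy
  have hy0 : 0 ≤ y := div_nonneg (by linarith) hdb.le
  have h1 : (1 - y) = 2 * b / (d + b) := by rw [hy, eq_div_iff hdb.ne', sub_mul, div_mul_cancel₀ _ hdb.ne']; ring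
  have h2 : (1 + y) = 2 * d / (d + b) := by rw [hy, eq_div_iff hdb.ne', add_mul, div_mul_cancel₀ _ hdb.ne']; ring
  have key := expAux y hy0
  rw [h1, h2] at key
  have hbe : b * Real.exp (2 * y) ≤ d := by
    rw [div_mul_eq_mul_div, div_le_div_iff₀ hdb hdb] at key
    nlinarith [key]
  have hmono : Real.exp (-(2 * (d - b) / S)) ≥ Real.exp (-(2 * y)) := by
    apply Real.exp_le_exp.mpr
    have : (d - b) / S ≤ y := by
      rw [hy]
      apply div_le_div_of_nonneg_left (by linarith) hdb hS
    rw [mul_div_assoc]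
    linarith
  calc b = b * Real.exp (2 * y) * Real.exp (-(2 * y)) := by
        rw [mul_assoc, ← Real.exp_add]; simp
    _ ≤ d * Real.exp (-(2 * y)) := by
        apply mul_le_mul_of_nonneg_right hbe (Real.exp_pos _).le
    _ ≤ d * Real.exp (-(2 * (d - b) / S)) := by
        apply mul_le_mul_of_nonneg_left hmono (by linarith)

lemma card_supersets {α : Type*} [DecidableEq α] (U A : Finset α) (k : ℕ)
    (hAU : A ⊆ U) (hmk : A.card ≤ k) :
    ((powersetCard k U).filter (fun S => A ⊆ S)).card
      = (U.card - A.card).choose (k - A.card) := by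
  rw [← Finset.card_sdiff_of_subset hAU, ← Finset.card_powersetCard (k - A.card) (U \ A)]
  apply Finset.card_bij' (fun S _ => S \ A) (fun B _ => B ∪ A)
  · intro S hS
    simp only [mem_filter, mem_powersetCard] at hS
    obtain ⟨⟨hSU, hSc⟩, hAS⟩ := hS
    simp only [mem_powersetCard]
    exact ⟨sdiff_subset_sdiff hSU (le_refl A), by rw [card_sdiff_of_subset hAS, hSc]⟩
  · intro B hB
    simp only [mem_powersetCard] at hB
    obtain ⟨hBU, hBc⟩ := hB
    have hdisj : Disjoint B A := disjoint_of_subset_left hBU sdiff_disjoint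
    simp only [mem_filter, mem_powersetCard]
    refine ⟨⟨union_subset (hBU.trans sdiff_subset) hAU, ?_⟩, subset_union_right⟩
    rw [card_union_of_disjoint hdisj, hBc]
    omega
  · intro S hS
    simp only [mem_filter, mem_powersetCard] at hS
    exact sdiff_union_of_subset hS.2
  · intro B hB
    simp only [mem_powersetCard] at hB
    have hdisj : Disjoint B A := disjoint_of_subset_left hB.1 sdiff_disjoint
    rw [union_sdiff_right, sdiff_eq_self_of_disjoint hdisj]

lemma idOne (a k : ℕ) (hak : a ≤ k) :
    ∀ m : ℕ, m ≤ a →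
      (Nat.choose k m : ℝ) * ∏ i ∈ range m, ((a : ℝ) - i)
        = (Nat.choose a m : ℝ) * ∏ i ∈ range m, ((k : ℝ) - i) := by
  intro m
  induction m with
  | zero => simp
  | succ m ih =>
    intro hma
    have hm : m ≤ a := by omega
    have hmk : m ≤ k := by omega
    have IH := ih hm
    have h1 : (Nat.choose k (m+1) : ℝ) * ((m : ℝ) + 1) = (Nat.choose k m : ℝ) * ((k : ℝ) - m) := by
      have h := congrArg (fun z : ℕ => (z : ℝ)) (Nat.choose_succ_right_eq k m)
      push_cast [Nat.cast_sub hmk] at h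
      linarith
    have h2 : (Nat.choose a (m+1) : ℝ) * ((m : ℝ) + 1) = (Nat.choose a m : ℝ) * ((a : ℝ) - m) := by
      have h := congrArg (fun z : ℕ => (z : ℝ)) (Nat.choose_succ_right_eq a m)
      push_cast [Nat.cast_sub hm] at h
      linarith
    have hmu : ((m : ℝ) + 1) ≠ 0 := by positivity
    apply mul_left_cancel₀ hmu
    rw [prod_range_succ, prod_range_succ]
    linear_combination ((∏ x ∈ range m, ((a:ℝ) - x)) * ((a:ℝ) - m)) * h1
      + (((k:ℝ) - m) * ((a:ℝ) - m)) * IH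
      - ((∏ x ∈ range m, ((k:ℝ) - x)) * ((k:ℝ) - m)) * h2

lemma idTwo (k n : ℕ) (hkn : k ≤ n) :
    ∀ m : ℕ, m ≤ k →
      (Nat.choose (n - m) (k - m) : ℝ) * ∏ i ∈ range m, ((n : ℝ) - i)
        = (Nat.choose n k : ℝ) * ∏ i ∈ range m, ((k : ℝ) - i) := by
  intro m
  induction m with
  | zero => simp
  | succ m ih =>
    intro hmk
    have hm : m ≤ k := by omega
    have hmn : m ≤ n := by omega
    have IH := ih hm
    have hN : (n - m) * Nat.choose (n - (m+1)) (k - (m+1))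
        = Nat.choose (n - m) (k - m) * (k - m) := by
      have e1 : n - m = (n - (m+1)) + 1 := by omega
      have e2 : k - m = (k - (m+1)) + 1 := by omega
      rw [e1, e2]
      exact Nat.add_one_mul_choose_eq (n - (m+1)) (k - (m+1))
    have h3 : ((n : ℝ) - m) * (Nat.choose (n - (m+1)) (k - (m+1)) : ℝ)
        = (Nat.choose (n - m) (k - m) : ℝ) * ((k : ℝ) - m) := by
      have h := congrArg (fun z : ℕ => (z : ℝ)) hN
      push_cast [Nat.cast_sub hmn, Nat.cast_sub hm] at h
      linarith
    rw [prod_range_succ, prod_range_succ]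
    linear_combination (∏ x ∈ range m, ((n:ℝ) - x)) * h3 + ((k:ℝ) - m) * IH

lemma prodBound (n k a m : ℕ) (hk1 : 1 ≤ k) (h2k : 2 * k ≤ n) (hmk : m ≤ k)
    (hfac : ∀ i : ℕ, i < m → (k : ℝ) ^ 2 / (n : ℝ) < (a : ℝ) - i) :
    ∏ i ∈ range m, ((k : ℝ) - i) ^ 2
      ≤ Real.exp (∑ i ∈ range m,
            (-(2 * (((a : ℝ) - (k : ℝ) ^ 2 / n) - i) / ((a : ℝ) + (k : ℝ) ^ 2 / n))))
        * ∏ i ∈ range m, (((a : ℝ) - i) * ((n : ℝ) - i)) := by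
  have hn0 : 0 < n := by omega
  have hnR : (0 : ℝ) < n := by exact_mod_cast hn0
  have hB0 : (0 : ℝ) < (k : ℝ) ^ 2 / n := by positivity
  rw [Real.exp_sum, ← prod_mul_distrib]
  apply Finset.prod_le_prod
  · intro i _; positivity
  · intro i hi
    rw [mem_range] at hi
    have hik : (i : ℝ) + 1 ≤ (k : ℝ) := by exact_mod_cast Nat.succ_le_of_lt (lt_of_lt_of_le hi hmk)
    have h2kR : 2 * (k : ℝ) ≤ (n : ℝ) := by exact_mod_cast h2k
    have hiR : (0 : ℝ) ≤ (i : ℝ) := Nat.cast_nonneg i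
    have hd := hfac i hi
    -- step 1 : (k-i)^2 * n ≤ k^2 * (n-i)
    have s1 : ((k : ℝ) - i) ^ 2 * n ≤ (k : ℝ) ^ 2 * ((n : ℝ) - i) := by
      nlinarith [mul_nonneg hiR (by linarith : (0:ℝ) ≤ (n:ℝ) - 2 * k + i),
        mul_nonneg hiR (by linarith : (0:ℝ) ≤ (k:ℝ) - i)]
    -- step 2
    have s2 := ratio_le_exp ((k : ℝ) ^ 2 / n) ((a : ℝ) - i) ((a : ℝ) + (k : ℝ) ^ 2 / n)
      hB0 hd (by linarith)
    have hni : (0 : ℝ) ≤ (n : ℝ) - i := by linarith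
    have hexpo : (-(2 * (((a : ℝ) - i) - (k : ℝ) ^ 2 / n) / ((a : ℝ) + (k : ℝ) ^ 2 / n)))
        = (-(2 * (((a : ℝ) - (k : ℝ) ^ 2 / n) - i) / ((a : ℝ) + (k : ℝ) ^ 2 / n))) := by
      ring_nf
    rw [hexpo] at s2
    calc ((k : ℝ) - i) ^ 2 ≤ (k : ℝ) ^ 2 / n * ((n : ℝ) - i) := by
          rw [div_mul_eq_mul_div, le_div_iff₀ hnR]; linarith
      _ ≤ (((a : ℝ) - i) * Real.exp (-(2 * (((a : ℝ) - (k : ℝ) ^ 2 / n) - i)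
            / ((a : ℝ) + (k : ℝ) ^ 2 / n)))) * ((n : ℝ) - i) :=
          mul_le_mul_of_nonneg_right s2 hni
      _ = Real.exp (-(2 * (((a : ℝ) - (k : ℝ) ^ 2 / n) - i) / ((a : ℝ) + (k : ℝ) ^ 2 / n)))
            * (((a : ℝ) - i) * ((n : ℝ) - i)) := by ring

lemma sumExpo (m : ℕ) (hm1 : 1 ≤ m) (D S : ℝ) :
    ∑ i ∈ range m, (-(2 * (D - i) / S))
      = -(((m : ℝ) * (2 * D - ((m : ℝ) - 1))) / S) := by
  have hgauss : (∑ i ∈ range m, (i : ℝ)) = (m : ℝ) * ((m : ℝ) - 1) / 2 := by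
    have h := Finset.sum_range_id_mul_two m
    have h2 := congrArg (fun z : ℕ => (z : ℝ)) h
    push_cast [Nat.cast_sub hm1] at h2
    push_cast
    linarith
  have : ∑ i ∈ range m, (-(2 * (D - i) / S)) = (∑ i ∈ range m, (-2 * (D - i))) / S := by
    rw [Finset.sum_div]
    apply Finset.sum_congr rfl
    intro i _; ring
  rw [this]
  have : (∑ i ∈ range m, (-2 * (D - (i : ℝ)))) = -2 * ((m : ℝ) * D) + 2 * (∑ i ∈ range m, (i : ℝ)) := by
    rw [Finset.sum_congr rfl (fun i _ => by ring : ∀ i ∈ range m, -2 * (D - (i:ℝ)) = -2 * D + 2 * i)]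
    rw [Finset.sum_add_distrib, Finset.sum_const, ← Finset.mul_sum]
    simp [nsmul_eq_mul]
    ring
  rw [this, hgauss]
  field_simp
  ring

private lemma quadAux (M f : ℝ) (hM : 2 ≤ M) (hf0 : 0 ≤ f) (hf1 : f < 1) :
    3 * (M + f) ^ 2 ≤ 4 * M * (M + 1 + 2 * f) := by
  nlinarith [sq_nonneg M, sq_nonneg f, mul_nonneg hf0 (by linarith : (0:ℝ) ≤ 1 - f)]

private lemma star2 (M f T B : ℝ) (hM : 2 ≤ M) (hf0 : 0 ≤ f) (hf1 : f < 1)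
    (hB : 0 < B) (hT : 0 < T) (hTMf : T < M + f) :
    min (T ^ 2 / (4 * B)) (T / 4) * ((M + B + f) + B)
      ≤ M * (2 * ((M + B + f) - B) - (M - 1)) := by
  have hMf : 0 < M + f := by linarith
  have hAB : (0:ℝ) < M + 2 * B + f := by linarith
  have hq := quadAux M f hM hf0 hf1
  have hgoal : M * (2 * ((M + B + f) - B) - (M - 1)) = M * (M + 1 + 2 * f) := by ring
  rw [hgoal]
  have hABe : (M + B + f) + B = M + 2 * B + f := by ring
  rw [hABe]
  rcases le_total T B with hTB | hTB
  · -- use T^2/(4B)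
    have h1 : min (T ^ 2 / (4 * B)) (T / 4) * (M + 2 * B + f)
        ≤ (T ^ 2 / (4 * B)) * (M + 2 * B + f) :=
      mul_le_mul_of_nonneg_right (min_le_left _ _) hAB.le
    have h2 : (T ^ 2 / (4 * B)) * (M + 2 * B + f) ≤ M * (M + 1 + 2 * f) := by
      rw [div_mul_eq_mul_div, div_le_iff₀ (by positivity)]
      rcases le_total B (M + f) with hc | hc
      · -- T² ≤ B(M+f), M+2B+f ≤ 3(M+f)
        have s1 : T ^ 2 ≤ B * (M + f) := by nlinarith
        have s2 : M + 2 * B + f ≤ 3 * (M + f) := by linarith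
        have s3 : T ^ 2 * (M + 2 * B + f) ≤ B * (M + f) * (3 * (M + f)) := by
          apply mul_le_mul s1 s2 hAB.le (by positivity)
        nlinarith [mul_le_mul_of_nonneg_left hq hB.le]
      · -- T ≤ M+f so T² ≤ (M+f)², M+2B+f ≤ 3B
        have s1 : T ^ 2 ≤ (M + f) ^ 2 := by nlinarith
        have s2 : M + 2 * B + f ≤ 3 * B := by linarith
        have s3 : T ^ 2 * (M + 2 * B + f) ≤ (M + f) ^ 2 * (3 * B) := by
          apply mul_le_mul s1 s2 hAB.le (by positivity)
        nlinarith [mul_le_mul_of_nonneg_left hq hB.le]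
    linarith
  · -- use T/4
    have h1 : min (T ^ 2 / (4 * B)) (T / 4) * (M + 2 * B + f)
        ≤ (T / 4) * (M + 2 * B + f) :=
      mul_le_mul_of_nonneg_right (min_le_right _ _) hAB.le
    have h2 : (T / 4) * (M + 2 * B + f) ≤ M * (M + 1 + 2 * f) := by
      rw [div_mul_eq_mul_div, div_le_iff₀ (by norm_num : (0:ℝ) < 4)]
      have s2 : M + 2 * B + f ≤ 3 * (M + f) := by linarith
      have s3 : T * (M + 2 * B + f) ≤ (M + f) * (3 * (M + f)) := by
        apply mul_le_mul hTMf.le s2 hAB.le (by positivity)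
      nlinarith
    linarith

lemma starIneq (a c m : ℕ) (T B : ℝ) (hB : 0 < B) (hT : 0 < T)
    (hm : m = max (a - c) 1) (hBc : B ≤ (c : ℝ)) (hcB : (c : ℝ) < B + 1)
    (haT : T + B < (a : ℝ)) (haT2 : (a : ℝ) ≤ T + B + 1) :
    min (T ^ 2 / (4 * B)) (T / 4) * ((a : ℝ) + B)
      ≤ (m : ℝ) * (2 * ((a : ℝ) - B) - ((m : ℝ) - 1)) := by
  have hAB : 0 < (a : ℝ) + B := by linarith
  rcases le_or_gt a (c + 1) with hcase | hcase
  · -- m = 1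
    have hm1 : m = 1 := by omega
    subst hm1
    have hA2 : (a : ℝ) < B + 2 := by
      have : (a : ℝ) ≤ (c : ℝ) + 1 := by exact_mod_cast hcase
      linarith
    simp only [Nat.cast_one]
    rcases le_total B 1 with hB1 | hB1
    · have h1 : min (T ^ 2 / (4 * B)) (T / 4) * ((a : ℝ) + B) ≤ (T / 4) * ((a : ℝ) + B) :=
        mul_le_mul_of_nonneg_right (min_le_right _ _) hAB.le
      have h2 : (T / 4) * ((a : ℝ) + B) ≤ 1 * (2 * ((a : ℝ) - B) - (1 - 1)) := by
        rw [div_mul_eq_mul_div, div_le_iff₀ (by norm_num : (0:ℝ) < 4)]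
        nlinarith [mul_nonneg hT.le (by linarith : (0:ℝ) ≤ 4 - ((a:ℝ) + B))]
      linarith
    · have h1 : min (T ^ 2 / (4 * B)) (T / 4) * ((a : ℝ) + B)
          ≤ (T ^ 2 / (4 * B)) * ((a : ℝ) + B) :=
        mul_le_mul_of_nonneg_right (min_le_left _ _) hAB.le
      have h2 : (T ^ 2 / (4 * B)) * ((a : ℝ) + B) ≤ 1 * (2 * ((a : ℝ) - B) - (1 - 1)) := by
        rw [div_mul_eq_mul_div, div_le_iff₀ (by positivity)]
        nlinarith [mul_nonneg (sq_nonneg T) (by linarith : (0:ℝ) ≤ 4 * B - ((a:ℝ) + B)),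
          mul_nonneg (mul_pos hB hT).le (by linarith : (0:ℝ) ≤ 2 - T),
          mul_pos hB (by linarith : (0:ℝ) < (a:ℝ) - B - T)]
      linarith
  · -- m = a - c ≥ 2
    have hm2 : m = a - c := by omega
    have hc_le_a : c ≤ a := by omega
    have hM : (m : ℝ) = (a : ℝ) - (c : ℝ) := by
      rw [hm2]; push_cast [Nat.cast_sub hc_le_a]; ring
    have hMge2 : (2 : ℝ) ≤ (m : ℝ) := by
      have : 2 ≤ m := by omega
      exact_mod_cast this
    have key := star2 ((a : ℝ) - (c : ℝ)) ((c : ℝ) - B) T B (by linarith) (by linarith)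
      (by linarith) hB hT (by linarith)
    have e1 : ((a : ℝ) - (c : ℝ)) + B + ((c : ℝ) - B) = (a : ℝ) := by ring
    rw [e1] at key
    calc min (T ^ 2 / (4 * B)) (T / 4) * ((a : ℝ) + B)
        ≤ ((a : ℝ) - (c : ℝ)) * (2 * ((a : ℝ) - B) - (((a : ℝ) - (c : ℝ)) - 1)) := key
      _ = (m : ℝ) * (2 * ((a : ℝ) - B) - ((m : ℝ) - 1)) := by rw [hM]

lemma dcount (n k a m : ℕ) (hmk : m ≤ k)
    (bad : Finset (Finset (Fin n) × Finset (Fin n)))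
    (hsub : bad ⊆ (Finset.powersetCard k (Finset.univ : Finset (Fin n))) ×ˢ
      (Finset.powersetCard k (Finset.univ : Finset (Fin n))))
    (hbig : ∀ ST ∈ bad, a ≤ (ST.1 ∩ ST.2).card) :
    bad.card * Nat.choose a m ≤ Nat.choose n m * (Nat.choose (n - m) (k - m)) ^ 2 := by
  classical
  set Ω := Finset.powersetCard k (Finset.univ : Finset (Fin n)) with hΩ
  have key := Finset.card_mul_le_card_mul
    (r := fun (ST : Finset (Fin n) × Finset (Fin n)) (A : Finset (Fin n)) => A ⊆ ST.1 ∩ ST.2)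
    (s := bad) (t := Finset.powersetCard m (Finset.univ : Finset (Fin n)))
    (m := Nat.choose a m) (n := (Nat.choose (n - m) (k - m)) ^ 2)
    ?_ ?_
  · have hcard : (Finset.powersetCard m (Finset.univ : Finset (Fin n))).card = Nat.choose n m := by
      rw [Finset.card_powersetCard, Finset.card_univ, Fintype.card_fin]
    rwa [hcard] at key
  · -- each bad pair contains at least C(a,m) m-subsets
    intro ST hST
    unfold Finset.bipartiteAbove
    have heq : (Finset.powersetCard m (Finset.univ : Finset (Fin n))).filter
        (fun A => A ⊆ ST.1 ∩ ST.2) = Finset.powersetCard m (ST.1 ∩ ST.2) := by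
      ext A
      simp only [mem_filter, mem_powersetCard, subset_univ, true_and]
      tauto
    rw [heq, Finset.card_powersetCard]
    exact Nat.choose_le_choose m (hbig ST hST)
  · -- each m-set is contained in at most C(n-m,k-m)^2 bad pairs
    intro A hA
    rw [mem_powersetCard] at hA
    obtain ⟨-, hAm⟩ := hA
    unfold Finset.bipartiteBelow
    have hsub2 : bad.filter (fun ST => A ⊆ ST.1 ∩ ST.2)
        ⊆ (Ω ×ˢ Ω).filter (fun ST => A ⊆ ST.1 ∧ A ⊆ ST.2) := by
      intro ST hST
      rw [mem_filter] at hST ⊢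
      refine ⟨hsub hST.1, ?_⟩
      rw [← Finset.subset_inter_iff]
      exact hST.2
    have hprod : (Ω ×ˢ Ω).filter (fun ST => A ⊆ ST.1 ∧ A ⊆ ST.2)
        = (Ω.filter (fun S => A ⊆ S)) ×ˢ (Ω.filter (fun S => A ⊆ S)) := by
      ext ST
      simp only [mem_filter, mem_product]
      tauto
    calc (bad.filter (fun ST => A ⊆ ST.1 ∩ ST.2)).card
        ≤ ((Ω ×ˢ Ω).filter (fun ST => A ⊆ ST.1 ∧ A ⊆ ST.2)).card := Finset.card_le_card hsub2
      _ = (Ω.filter (fun S => A ⊆ S)).card * (Ω.filter (fun S => A ⊆ S)).card := by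
          rw [hprod, Finset.card_product]
      _ = (Nat.choose (n - m) (k - m)) ^ 2 := by
          rw [hΩ, card_supersets _ _ _ (Finset.subset_univ A) (hAm ▸ hmk : A.card ≤ k)]
          rw [Finset.card_univ, Fintype.card_fin, hAm]
          ring

open scoped Classical

/-- Let `εn` be an integer with `εn ≤ n/2`, and let `X ~ HGeom(n, εn, εn)`,
i.e. `X = |S ∩ T|` for `S, T` independent uniformly random subsets of `{1, …, n}` of size `εn`.
Then for all `t > 0`, `P(X/n − ε² > t) ≤ exp(−min(t²·n/(4ε²), t·n/4)).` -/
theorem hypergeometric_tail (n : ℕ) (hn : 0 < n) (ε t : ℝ) (hε : 0 < ε) (ht : 0 < t)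
    (k : ℕ) (hk : (k : ℝ) = ε * n) (hk2 : 2 * k ≤ n) :
    ((((Finset.powersetCard k (Finset.univ : Finset (Fin n))) ×ˢ
          (Finset.powersetCard k (Finset.univ : Finset (Fin n)))).filter
        (fun ST => (((ST.1 ∩ ST.2).card : ℝ) / n - ε ^ 2 > t))).card : ℝ) /
      ((((Finset.powersetCard k (Finset.univ : Finset (Fin n))) ×ˢ
          (Finset.powersetCard k (Finset.univ : Finset (Fin n)))).card : ℝ))
      ≤ Real.exp (-(min (t ^ 2 * n / (4 * ε ^ 2)) (t * n / 4))) := by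
  have hnR : (0 : ℝ) < n := by exact_mod_cast hn
  have hk1 : 1 ≤ k := by
    by_contra hcon
    push_neg at hcon
    have hk0 : k = 0 := by omega
    rw [hk0] at hk
    norm_num at hk
    rcases hk with h | h
    · exact absurd h (ne_of_gt hε)
    · omega
  have hkR : (0 : ℝ) < k := by exact_mod_cast hk1
  have hkn : k ≤ n := by omega
  have hεkn : ε = (k : ℝ) / n := by field_simp [hk]; linarith [hk]
  set Ω := Finset.powersetCard k (Finset.univ : Finset (Fin n)) with hΩ
  set bad := (Ω ×ˢ Ω).filter (fun ST => (((ST.1 ∩ ST.2).card : ℝ) / n - ε ^ 2 > t)) with hbad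
  have hΩcard : Ω.card = Nat.choose n k := by
    rw [hΩ, Finset.card_powersetCard, Finset.card_univ, Fintype.card_fin]
  have hNpos : (0 : ℝ) < (((Ω ×ˢ Ω).card : ℕ) : ℝ) := by
    rw [Finset.card_product, hΩcard]
    have := Nat.choose_pos hkn
    positivity
  set B : ℝ := (k : ℝ) ^ 2 / n with hB
  have hB0 : 0 < B := by positivity
  set T : ℝ := t * n with hT
  have hT0 : 0 < T := by positivity
  have hεB : ε ^ 2 * n = B := by rw [hεkn, hB]; field_simp
  have hEmin : min (t ^ 2 * n / (4 * ε ^ 2)) (t * n / 4) = min (T ^ 2 / (4 * B)) (T / 4) := by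
    have e1 : t ^ 2 * n / (4 * ε ^ 2) = T ^ 2 / (4 * B) := by
      rw [hεkn, hB, hT]; field_simp
    have e2 : t * n / 4 = T / 4 := by rw [hT]
    rw [e1, e2]
  set a : ℕ := ⌊T + B⌋₊ + 1 with ha
  have haT : T + B < (a : ℝ) := by
    have h := Nat.lt_succ_floor (T + B)
    rw [ha]
    exact_mod_cast h
  have haT2 : (a : ℝ) ≤ T + B + 1 := by
    rw [ha]; push_cast
    have := Nat.floor_le (by positivity : (0:ℝ) ≤ T + B)
    linarith
  -- event characterization
  have hev : ∀ ST : Finset (Fin n) × Finset (Fin n), ST ∈ bad → a ≤ (ST.1 ∩ ST.2).card := by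
    intro ST hST
    rw [hbad, mem_filter] at hST
    have h := hST.2
    have hgt : T + B < (((ST.1 ∩ ST.2).card : ℕ) : ℝ) := by
      have h2 : t + ε ^ 2 < (((ST.1 ∩ ST.2).card : ℕ) : ℝ) / n := by linarith
      have h3 : (t + ε ^ 2) * n < ((((ST.1 ∩ ST.2).card : ℕ) : ℝ) / n) * n :=
        mul_lt_mul_of_pos_right h2 hnR
      rw [div_mul_cancel₀ _ (ne_of_gt hnR)] at h3
      have h4 : T + B = (t + ε ^ 2) * n := by rw [hT, ← hεB]; ring
      linarith
    have := Nat.floor_lt (by positivity : (0:ℝ) ≤ T + B) |>.mpr hgt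
    omega
  rcases lt_or_ge k a with hka | hak
  · -- event is empty
    have hempty : bad = ∅ := by
      rw [Finset.eq_empty_iff_forall_notMem]
      intro ST hST
      have h1 := hev ST hST
      rw [hbad, mem_filter] at hST
      have hST1 : ST.1 ∈ Ω := (Finset.mem_product.mp hST.1).1
      rw [hΩ, mem_powersetCard] at hST1
      have : (ST.1 ∩ ST.2).card ≤ k := by
        rw [← hST1.2]
        exact Finset.card_le_card Finset.inter_subset_left
      omega
    rw [hempty]
    simp only [Finset.card_empty, Nat.cast_zero, zero_div]
    positivity
  · -- main case
    set c : ℕ := ⌈B⌉₊ with hc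
    set m : ℕ := max (a - c) 1 with hm
    have hBc : B ≤ (c : ℝ) := Nat.le_ceil B
    have hcB : (c : ℝ) < B + 1 := Nat.ceil_lt_add_one hB0.le
    have hm1 : 1 ≤ m := le_max_right _ _
    have hma : m ≤ a := by
      rw [hm]; rw [ha]; omega
    have hmk : m ≤ k := le_trans hma hak
    have hmkn : m ≤ n := le_trans hmk hkn
    -- each factor has a - i > B
    have hfac : ∀ i : ℕ, i < m → B < (a : ℝ) - i := by
      intro i hi
      rcases lt_max_iff.mp (hm ▸ hi) with h | h
      · have : i + c + 1 ≤ a := by omega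
        have hle : ((i : ℝ) + (c : ℝ) + 1) ≤ (a : ℝ) := by exact_mod_cast this
        linarith
      · interval_cases i
        simp only [Nat.cast_zero, sub_zero]
        linarith
    -- double counting
    have hdc := dcount n k a m hmk bad (Finset.filter_subset _ _) hev
    -- chain in ℝ
    rw [div_le_iff₀ hNpos]
    have hprodpos : 0 < ∏ i ∈ range m, (((a : ℝ) - i) * ((n : ℝ) - i)) := by
      apply Finset.prod_pos
      intro i hi
      rw [mem_range] at hi
      have h1 := hfac i hi
      have h2 : (i : ℝ) < (n : ℝ) := by
        exact_mod_cast lt_of_lt_of_le hi hmkn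
      exact mul_pos (by linarith) (by linarith)
    have hch : (0:ℝ) < (Nat.choose a m : ℝ) := by
      exact_mod_cast Nat.choose_pos hma
    have hcancel : 0 < (Nat.choose a m : ℝ) * ∏ i ∈ range m, (((a : ℝ) - i) * ((n : ℝ) - i)) :=
      mul_pos hch hprodpos
    rw [← mul_le_mul_iff_of_pos_right hcancel]
    -- LHS bound via double counting
    have step1 : ((bad.card : ℕ) : ℝ) * ((Nat.choose a m : ℝ) * ∏ i ∈ range m, (((a : ℝ) - i) * ((n : ℝ) - i)))
        ≤ ((Nat.choose n m : ℝ) * (Nat.choose (n - m) (k - m) : ℝ) ^ 2) * ∏ i ∈ range m, (((a : ℝ) - i) * ((n : ℝ) - i)) := by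
      rw [← mul_assoc]
      apply mul_le_mul_of_nonneg_right _ hprodpos.le
      have : ((bad.card * Nat.choose a m : ℕ) : ℝ) ≤ ((Nat.choose n m * (Nat.choose (n - m) (k - m)) ^ 2 : ℕ) : ℝ) := by
        exact_mod_cast hdc
      push_cast at this
      linarith
    -- identity transformation
    have hid : ((Nat.choose n m : ℝ) * (Nat.choose (n - m) (k - m) : ℝ) ^ 2) * ∏ i ∈ range m, (((a : ℝ) - i) * ((n : ℝ) - i))
        = (Nat.choose n k : ℝ) ^ 2 * (Nat.choose a m : ℝ) * ∏ i ∈ range m, ((k : ℝ) - i) ^ 2 := by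
      have hnm : ((Nat.choose n m * Nat.choose (n - m) (k - m) : ℕ) : ℝ)
          = ((Nat.choose n k * Nat.choose k m : ℕ) : ℝ) := by
        exact_mod_cast congrArg (fun z : ℕ => (z : ℝ)) (Nat.choose_mul (n := n) hmk).symm
      push_cast at hnm
      have i1 := idOne a k hak m hma
      have i2 := idTwo k n hkn m hmk
      have hsplit : ∏ i ∈ range m, (((a : ℝ) - i) * ((n : ℝ) - i))
          = (∏ i ∈ range m, ((a : ℝ) - i)) * (∏ i ∈ range m, ((n : ℝ) - i)) :=
        Finset.prod_mul_distrib
      have hsq : ∏ i ∈ range m, ((k : ℝ) - i) ^ 2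
          = (∏ i ∈ range m, ((k : ℝ) - i)) * (∏ i ∈ range m, ((k : ℝ) - i)) := by
        rw [← Finset.prod_mul_distrib]
        apply Finset.prod_congr rfl
        intro i _; ring
      rw [hsplit, hsq]
      linear_combination ((Nat.choose (n - m) (k - m) : ℝ) * (∏ i ∈ range m, ((a : ℝ) - i))
          * (∏ i ∈ range m, ((n : ℝ) - i))) * hnm
        + ((Nat.choose n k : ℝ) * (Nat.choose (n - m) (k - m) : ℝ)
          * (∏ i ∈ range m, ((n : ℝ) - i))) * i1
        + ((Nat.choose n k : ℝ) * (Nat.choose a m : ℝ)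
          * (∏ i ∈ range m, ((k : ℝ) - i))) * i2
    -- product bound
    have step2 : ∏ i ∈ range m, ((k : ℝ) - i) ^ 2
        ≤ Real.exp (-(min (T ^ 2 / (4 * B)) (T / 4)))
          * ∏ i ∈ range m, (((a : ℝ) - i) * ((n : ℝ) - i)) := by
      have pb := prodBound n k a m hk1 hk2 hmk (fun i hi => hB ▸ hfac i hi)
      have hsum := sumExpo m hm1 ((a : ℝ) - B) ((a : ℝ) + B)
      have hexp_le : Real.exp (∑ i ∈ range m,
            (-(2 * (((a : ℝ) - (k : ℝ) ^ 2 / n) - i) / ((a : ℝ) + (k : ℝ) ^ 2 / n))))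
          ≤ Real.exp (-(min (T ^ 2 / (4 * B)) (T / 4))) := by
        apply Real.exp_le_exp.mpr
        have hBkn : (k : ℝ) ^ 2 / n = B := hB.symm
        rw [hBkn, hsum]
        have hstar := starIneq a c m T B hB0 hT0 hm hBc hcB haT haT2
        have hABpos : (0 : ℝ) < (a : ℝ) + B := by linarith
        rw [neg_le_neg_iff, le_div_iff₀ hABpos]
        linarith
      calc ∏ i ∈ range m, ((k : ℝ) - i) ^ 2
          ≤ Real.exp (∑ i ∈ range m,
              (-(2 * (((a : ℝ) - (k : ℝ) ^ 2 / n) - i) / ((a : ℝ) + (k : ℝ) ^ 2 / n))))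
            * ∏ i ∈ range m, (((a : ℝ) - i) * ((n : ℝ) - i)) := pb
        _ ≤ Real.exp (-(min (T ^ 2 / (4 * B)) (T / 4)))
            * ∏ i ∈ range m, (((a : ℝ) - i) * ((n : ℝ) - i)) :=
            mul_le_mul_of_nonneg_right hexp_le hprodpos.le
    -- put everything together
    have hNcard : (((Ω ×ˢ Ω).card : ℕ) : ℝ) = (Nat.choose n k : ℝ) ^ 2 := by
      rw [Finset.card_product, hΩcard]; push_cast; ring
    calc ((bad.card : ℕ) : ℝ) * ((Nat.choose a m : ℝ) * ∏ i ∈ range m, (((a : ℝ) - i) * ((n : ℝ) - i)))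
        ≤ ((Nat.choose n m : ℝ) * (Nat.choose (n - m) (k - m) : ℝ) ^ 2) * ∏ i ∈ range m, (((a : ℝ) - i) * ((n : ℝ) - i)) := step1
      _ = (Nat.choose n k : ℝ) ^ 2 * (Nat.choose a m : ℝ) * ∏ i ∈ range m, ((k : ℝ) - i) ^ 2 := hid
      _ ≤ (Nat.choose n k : ℝ) ^ 2 * (Nat.choose a m : ℝ) *
            (Real.exp (-(min (T ^ 2 / (4 * B)) (T / 4)))
              * ∏ i ∈ range m, (((a : ℝ) - i) * ((n : ℝ) - i))) := by
          apply mul_le_mul_of_nonneg_left step2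
          positivity
      _ = Real.exp (-(min (T ^ 2 / (4 * B)) (T / 4))) * (((Ω ×ˢ Ω).card : ℕ) : ℝ)
            * ((Nat.choose a m : ℝ) * ∏ i ∈ range m, (((a : ℝ) - i) * ((n : ℝ) - i))) := by
          rw [hNcard]; ring
      _ = Real.exp (-(min (t ^ 2 * n / (4 * ε ^ 2)) (t * n / 4))) * (((Ω ×ˢ Ω).card : ℕ) : ℝ)
            * ((Nat.choose a m : ℝ) * ∏ i ∈ range m, (((a : ℝ) - i) * ((n : ℝ) - i))) := by
          rw [hEmin]
end

section
/- Let k ≤ n be a nonnegative integer, and let w ∈ [0, 1]^n be an n-dimensional vector with ‖w‖₁ ≤ k. Then w is a convex combination of the indicator vectors 1_T over subsets T ⊆ {1, …, n} with |T| ≤ k; that is, there exist subsets T₁, …, T_r ⊆ {1, …, n}, each of size at most k, and nonnegative weights a₁, …, a_r with Σ a_i ≤ 1, such that w = Σ_i a_i·1_{T_i} (where the remaining weight 1 − Σ a_i is placed on the empty set). -/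
open Finset

/-- The decomposition property we want to establish. -/
def Decomp (n k : ℕ) (w : Fin n → ℝ) : Prop :=
  ∃ (r : ℕ) (T : Fin r → Finset (Fin n)) (a : Fin r → ℝ),
    (∀ j, (T j).card ≤ k) ∧ (∀ j, 0 ≤ a j) ∧ (∑ j, a j) ≤ 1 ∧
    ∀ i, w i = ∑ j, a j * (if i ∈ T j then 1 else 0)

lemma decomp_indicator {n k : ℕ} (S : Finset (Fin n)) (hS : S.card ≤ k) :
    Decomp n k (fun i => if i ∈ S then 1 else 0) :=
  ⟨1, fun _ => S, fun _ => 1, fun _ => hS, fun _ => zero_le_one, by simp,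
    fun i => by simp⟩

lemma decomp_combine {n k : ℕ} {u v : Fin n → ℝ} {c d : ℝ}
    (hc : 0 ≤ c) (hd : 0 ≤ d) (hcd : c + d ≤ 1)
    (hu : Decomp n k u) (hv : Decomp n k v) :
    Decomp n k (fun i => c * u i + d * v i) := by
  obtain ⟨r1, T1, a1, hT1, ha1, hs1, he1⟩ := hu
  obtain ⟨r2, T2, a2, hT2, ha2, hs2, he2⟩ := hv
  refine ⟨r1 + r2, Fin.append T1 T2,
    Fin.append (fun j => c * a1 j) (fun j => d * a2 j), ?_, ?_, ?_, ?_⟩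
  · intro j
    refine Fin.addCases (fun j => ?_) (fun j => ?_) j
    · simpa using hT1 j
    · simpa using hT2 j
  · intro j
    refine Fin.addCases (fun j => ?_) (fun j => ?_) j
    · simpa using mul_nonneg hc (ha1 j)
    · simpa using mul_nonneg hd (ha2 j)
  · rw [Fin.sum_univ_add]
    simp only [Fin.append_left, Fin.append_right, ← Finset.mul_sum]
    calc c * ∑ j, a1 j + d * ∑ j, a2 j ≤ c * 1 + d * 1 := by
          gcongr
      _ ≤ 1 := by linarith
  · intro i
    rw [Fin.sum_univ_add]
    simp only [Fin.append_left, Fin.append_right, he1 i, he2 i, Finset.mul_sum]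
    congr 1 <;> · apply Finset.sum_congr rfl; intro j _; ring

lemma decomp_main (n k : ℕ) : ∀ (N : ℕ) (w : Fin n → ℝ),
    (∀ i, 0 ≤ w i ∧ w i ≤ 1) → (∑ i, w i) ≤ (k : ℝ) →
    (univ.filter fun i => w i ≠ 0 ∧ w i ≠ 1).card ≤ N → Decomp n k w := by
  intro N
  induction N with
  | zero =>
    intro w hw hsum hcard
    -- every coordinate is 0 or 1
    have hall : ∀ i : Fin n, w i = 0 ∨ w i = 1 := by
      intro i
      by_contra h
      push_neg at h
      have : i ∈ univ.filter fun i => w i ≠ 0 ∧ w i ≠ 1 := by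
        simp [h.1, h.2]
      have := Finset.card_pos.mpr ⟨i, this⟩
      omega
    set S : Finset (Fin n) := univ.filter fun i => w i = 1 with hSdef
    have hweq : ∀ i, w i = if i ∈ S then 1 else 0 := by
      intro i
      rcases hall i with h | h
      · have : i ∉ S := by simp [hSdef, h]
        simp [this, h]
      · simp [hSdef, h]
    have hsum' : (S.card : ℝ) ≤ (k : ℝ) := by
      have : ∑ i, w i = (S.card : ℝ) := by
        rw [Finset.sum_congr rfl fun i _ => hweq i]
        simp [Finset.sum_ite_mem]
      linarith [this ▸ hsum]
    have hScard : S.card ≤ k := by exact_mod_cast hsum'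
    have := decomp_indicator S hScard
    convert this using 1
    exact funext hweq
  | succ N ih =>
    intro w hw hsum hcard
    by_cases hle : (univ.filter fun i => w i ≠ 0 ∧ w i ≠ 1).card ≤ N
    · exact ih w hw hsum hle
    -- there is a fractional coordinate i0
    have hne : (univ.filter fun i => w i ≠ 0 ∧ w i ≠ 1).Nonempty := by
      rw [← Finset.card_pos]; omega
    obtain ⟨i0, hi0⟩ := hne
    rw [Finset.mem_filter] at hi0
    obtain ⟨-, hi0ne0, hi0ne1⟩ := hi0
    have hi0pos : 0 < w i0 := lt_of_le_of_ne (hw i0).1 (Ne.symm hi0ne0)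
    have hi0lt1 : w i0 < 1 := lt_of_le_of_ne (hw i0).2 hi0ne1
    by_cases hj : ∃ j, j ≠ i0 ∧ w j ≠ 0 ∧ w j ≠ 1
    · -- two fractional coordinates: shift mass between them
      obtain ⟨j0, hji, hj0, hj1⟩ := hj
      have hjpos : 0 < w j0 := lt_of_le_of_ne (hw j0).1 (Ne.symm hj0)
      have hjlt1 : w j0 < 1 := lt_of_le_of_ne (hw j0).2 hj1
      set t1 : ℝ := min (1 - w i0) (w j0) with ht1
      set t2 : ℝ := min (w i0) (1 - w j0) with ht2
      have ht1pos : 0 < t1 := lt_min (by linarith) hjpos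
      have ht2pos : 0 < t2 := lt_min hi0pos (by linarith)
      set e : Fin n → ℝ := fun x => (if x = i0 then 1 else 0) - (if x = j0 then 1 else 0)
        with he
      have hesum : ∑ x, e x = 0 := by
        simp [he, Finset.sum_sub_distrib]
      set u : Fin n → ℝ := fun x => w x + t1 * e x with hu
      set v : Fin n → ℝ := fun x => w x - t2 * e x with hv
      have hex : ∀ x, x ≠ i0 → x ≠ j0 → e x = 0 := by
        intro x h1 h2; simp [he, h1, h2]
      have hei : e i0 = 1 := by simp [he, hji.symm]
      have hej : e j0 = -1 := by simp [he, hji]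
      have hui0 : u i0 = w i0 + t1 := by simp [hu, hei]
      have huj0 : u j0 = w j0 - t1 := by simp [hu, hej]; try ring
      have hvi0 : v i0 = w i0 - t2 := by simp [hv, hei]
      have hvj0 : v j0 = w j0 + t2 := by simp [hv, hej]; try ring
      have ht1le1 : t1 ≤ 1 - w i0 := by rw [ht1]; exact min_le_left _ _
      have ht1le2 : t1 ≤ w j0 := by rw [ht1]; exact min_le_right _ _
      have ht2le1 : t2 ≤ w i0 := by rw [ht2]; exact min_le_left _ _
      have ht2le2 : t2 ≤ 1 - w j0 := by rw [ht2]; exact min_le_right _ _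
      have hubd : ∀ x, 0 ≤ u x ∧ u x ≤ 1 := by
        intro x
        by_cases h1 : x = i0
        · rw [h1, hui0]; constructor <;> linarith
        by_cases h2 : x = j0
        · rw [h2, huj0]; constructor <;> linarith
        · simp only [hu, hex x h1 h2, mul_zero, add_zero]; exact hw x
      have hvbd : ∀ x, 0 ≤ v x ∧ v x ≤ 1 := by
        intro x
        by_cases h1 : x = i0
        · rw [h1, hvi0]; constructor <;> linarith
        by_cases h2 : x = j0
        · rw [h2, hvj0]; constructor <;> linarith
        · simp only [hv, hex x h1 h2, mul_zero, sub_zero]; exact hw x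
      have husum : ∑ x, u x ≤ (k : ℝ) := by
        simp only [hu, Finset.sum_add_distrib, ← Finset.mul_sum, hesum]
        simpa using hsum
      have hvsum : ∑ x, v x ≤ (k : ℝ) := by
        simp only [hv, Finset.sum_sub_distrib, ← Finset.mul_sum, hesum]
        simpa using hsum
      -- fractional sets shrink strictly
      have hsubu : (univ.filter fun i => u i ≠ 0 ∧ u i ≠ 1) ⊂
          (univ.filter fun i => w i ≠ 0 ∧ w i ≠ 1) := by
        constructor
        · intro x hx
          rw [Finset.mem_filter] at hx ⊢
          refine ⟨Finset.mem_univ x, ?_⟩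
          by_cases h1 : x = i0
          · subst h1; exact ⟨hi0ne0, hi0ne1⟩
          by_cases h2 : x = j0
          · subst h2; exact ⟨hj0, hj1⟩
          · simpa [hu, hex x h1 h2] using hx.2
        · intro hcon
          rcases le_total (1 - w i0) (w j0) with hm | hm
          · have hmem : i0 ∈ univ.filter fun i => w i ≠ 0 ∧ w i ≠ 1 := by
              simp [hi0ne0, hi0ne1]
            have hmem2 := hcon hmem
            rw [Finset.mem_filter] at hmem2
            apply hmem2.2.2
            rw [hui0, ht1, min_eq_left hm]; try ring
          · have hmem : j0 ∈ univ.filter fun i => w i ≠ 0 ∧ w i ≠ 1 := by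
              simp [hj0, hj1]
            have hmem2 := hcon hmem
            rw [Finset.mem_filter] at hmem2
            apply hmem2.2.1
            rw [huj0, ht1, min_eq_right hm]; try ring
      have hsubv : (univ.filter fun i => v i ≠ 0 ∧ v i ≠ 1) ⊂
          (univ.filter fun i => w i ≠ 0 ∧ w i ≠ 1) := by
        constructor
        · intro x hx
          rw [Finset.mem_filter] at hx ⊢
          refine ⟨Finset.mem_univ x, ?_⟩
          by_cases h1 : x = i0
          · subst h1; exact ⟨hi0ne0, hi0ne1⟩
          by_cases h2 : x = j0
          · subst h2; exact ⟨hj0, hj1⟩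
          · simpa [hv, hex x h1 h2] using hx.2
        · intro hcon
          rcases le_total (w i0) (1 - w j0) with hm | hm
          · have hmem : i0 ∈ univ.filter fun i => w i ≠ 0 ∧ w i ≠ 1 := by
              simp [hi0ne0, hi0ne1]
            have hmem2 := hcon hmem
            rw [Finset.mem_filter] at hmem2
            apply hmem2.2.1
            rw [hvi0, ht2, min_eq_left hm]; try ring
          · have hmem : j0 ∈ univ.filter fun i => w i ≠ 0 ∧ w i ≠ 1 := by
              simp [hj0, hj1]
            have hmem2 := hcon hmem
            rw [Finset.mem_filter] at hmem2
            apply hmem2.2.2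
            rw [hvj0, ht2, min_eq_right hm]; try ring
      have hcu : (univ.filter fun i => u i ≠ 0 ∧ u i ≠ 1).card ≤ N := by
        have := Finset.card_lt_card hsubu; omega
      have hcv : (univ.filter fun i => v i ≠ 0 ∧ v i ≠ 1).card ≤ N := by
        have := Finset.card_lt_card hsubv; omega
      have hdu := ih u hubd husum hcu
      have hdv := ih v hvbd hvsum hcv
      set c : ℝ := t2 / (t1 + t2) with hc
      set d : ℝ := t1 / (t1 + t2) with hd
      have htsum : 0 < t1 + t2 := by linarith
      have hc0 : 0 ≤ c := div_nonneg ht2pos.le htsum.le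
      have hd0 : 0 ≤ d := div_nonneg ht1pos.le htsum.le
      have hcd1 : c + d = 1 := by
        rw [hc, hd, ← add_div, add_comm, div_self htsum.ne']
      have hcd : c + d ≤ 1 := le_of_eq hcd1
      have := decomp_combine hc0 hd0 hcd hdu hdv
      convert this using 1
      funext x
      have h2 : c * t1 = d * t2 := by
        rw [hc, hd]; field_simp
      simp only [hu, hv]
      linear_combination (-(w x)) * hcd1 - (e x) * h2
    · -- exactly one fractional coordinate i0
      push_neg at hj
      have hall : ∀ x, x ≠ i0 → w x = 0 ∨ w x = 1 := by
        intro x hx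
        by_contra h
        push_neg at h
        exact h.2 (hj x hx h.1)
      set S : Finset (Fin n) := univ.filter fun i => w i = 1 with hSdef
      have hi0S : i0 ∉ S := by simp [hSdef, hi0ne1]
      have hweq : ∀ x, x ≠ i0 → w x = if x ∈ S then 1 else 0 := by
        intro x hx
        rcases hall x hx with h | h
        · have : x ∉ S := by simp [hSdef, h]
          simp [this, h]
        · simp [hSdef, h]
      have hsumS : ∑ x, w x = w i0 + (S.card : ℝ) := by
        have h1 : ∑ x, w x = ∑ x ∈ insert i0 S, w x := by
          symm
          apply Finset.sum_subset (Finset.subset_univ _)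
          intro x _ hx
          rw [Finset.mem_insert, not_or] at hx
          rw [hweq x hx.1, if_neg hx.2]
        rw [h1, Finset.sum_insert hi0S]
        congr 1
        rw [Finset.sum_congr rfl fun x hx => hweq x (by rintro rfl; exact hi0S hx)]
        simp
      have hcardS : S.card + 1 ≤ k := by
        have : (S.card : ℝ) < (k : ℝ) := by
          rw [hsumS] at hsum; linarith
        exact_mod_cast Nat.add_one_le_iff.mpr (by exact_mod_cast this)
      refine ⟨2, ![insert i0 S, S], ![w i0, 1 - w i0], ?_, ?_, ?_, ?_⟩
      · intro j
        fin_cases j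
        · simpa using le_trans (Finset.card_insert_le i0 S) hcardS
        · simp
          omega
      · intro j
        fin_cases j
        · simpa using hi0pos.le
        · simpa using hi0lt1.le
      · rw [Fin.sum_univ_two]
        norm_num
      · intro x
        by_cases hx : x = i0
        · subst hx
          simp [Fin.sum_univ_two, hi0S]
        · rw [Fin.sum_univ_two]
          simp only [Matrix.cons_val_zero, Matrix.cons_val_one, Matrix.head_cons,
            Finset.mem_insert]
          rcases hall x hx with h | h
          · have hxS : x ∉ S := by simp [hSdef, h]
            simp [h, hx, hxS]
          · have hxS : x ∈ S := by simp [hSdef, h]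
            simp [h, hx, hxS]

/-- Let `k ≤ n` be a nonnegative integer and `w ∈ [0,1]^n` with `‖w‖₁ ≤ k`.
Then `w` is a convex combination of indicator vectors `1_T` of subsets `T ⊆ {1, …, n}` with
`|T| ≤ k` (the remaining weight `1 − Σ aᵢ` being placed on the empty set). -/
theorem convex_combination_of_indicators (n k : ℕ) (hk : k ≤ n) (w : Fin n → ℝ)
    (hw : ∀ i, 0 ≤ w i ∧ w i ≤ 1) (h1 : ∑ i, |w i| ≤ (k : ℝ)) :
    ∃ (r : ℕ) (T : Fin r → Finset (Fin n)) (a : Fin r → ℝ),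
      (∀ j, (T j).card ≤ k) ∧ (∀ j, 0 ≤ a j) ∧ (∑ j, a j) ≤ 1 ∧
      ∀ i, w i = ∑ j, a j * (if i ∈ T j then 1 else 0) := by
  have hsum : ∑ i, w i ≤ (k : ℝ) := by
    calc ∑ i, w i = ∑ i, |w i| := by
          exact Finset.sum_congr rfl fun i _ => (abs_of_nonneg (hw i).1).symm
      _ ≤ (k : ℝ) := h1
  exact decomp_main n k n w hw hsum (le_trans (Finset.card_filter_le _ _) (by simp))
end

section
/- There is a universal constant c > 0 such that the following holds. Let X₁, …, Xₙ ∈ ℝ^d be κ-friendly (with corruption parameter ε). Then for any subset B′ ⊆ {1, …, n} of size k ≤ εn, one has |‖Σ_{i∈B′} X_i‖² − k·d| ≤ c·κ·k·(√(εnd) + εn). -/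
open scoped RealInnerProductSpace

/-- A dataset `X₁, …, Xₙ ∈ ℝ^d` is `κ`-friendly (with corruption parameter `ε`) if:
(1) for all disjoint subsets `S, T ⊆ {1, …, n}` of sizes `≤ εn`,
`|⟨Σ_{i∈S} Xᵢ, Σ_{i∈T} Xᵢ⟩| ≤ κ·√(|S||T|)·max(√(εnd), εn)`;
(2) for all distinct `i ≠ j`, `|⟨Xᵢ, Xⱼ⟩| ≤ κ·√d`;
(3) for all `i`, `|‖Xᵢ‖² − d| ≤ κ·√d`. -/
def Friendly (d n : ℕ) (ε κ : ℝ) (X : Fin n → EuclideanSpace ℝ (Fin d)) : Prop :=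
  (∀ S T : Finset (Fin n), Disjoint S T →
      (S.card : ℝ) ≤ ε * n → (T.card : ℝ) ≤ ε * n →
      |⟪∑ i ∈ S, X i, ∑ i ∈ T, X i⟫| ≤
        κ * (Real.sqrt (S.card * T.card) * max (Real.sqrt (ε * n * d)) (ε * n))) ∧
  (∀ i j : Fin n, i ≠ j → |⟪X i, X j⟫| ≤ κ * Real.sqrt d) ∧
  (∀ i : Fin n, |‖X i‖ ^ 2 - (d : ℝ)| ≤ κ * Real.sqrt d)

open Finset in
theorem count_lemma {ι : Type*} [DecidableEq ι] (B : Finset ι) {i j : ι} (hi : i ∈ B) (hj : j ∈ B)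
    (hij : i ≠ j) :
    (B.powerset.filter fun S => i ∈ S ∧ j ∉ S).card = 2 ^ (B.card - 2) := by
  have hD : ((B.erase i).erase j).card = B.card - 2 := by
    rw [card_erase_of_mem (mem_erase.mpr ⟨hij.symm, hj⟩), card_erase_of_mem hi]; omega
  rw [← hD, ← card_powerset]
  apply Finset.card_bij' (fun S _ => S.erase i) (fun T _ => insert i T)
  · intro S hS
    simp only [mem_filter, mem_powerset] at hS
    exact insert_erase hS.2.1
  · intro T hT
    simp only [mem_powerset] at hT
    have hiT : i ∉ T := fun h => by simpa using (mem_erase.mp (mem_erase.mp (hT h)).2).1 rfl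
    exact erase_insert hiT
  · intro S hS
    simp only [mem_filter, mem_powerset] at hS
    obtain ⟨hSB, hiS, hjS⟩ := hS
    simp only [mem_powerset]
    intro x hx
    simp only [mem_erase] at hx ⊢
    exact ⟨fun h => hjS (h ▸ hx.2), hx.1, hSB hx.2⟩
  · intro T hT
    simp only [mem_powerset] at hT
    simp only [mem_filter, mem_powerset]
    have hiT : i ∉ T := fun h => by simpa using (mem_erase.mp (mem_erase.mp (hT h)).2).1 rfl
    refine ⟨?_, mem_insert_self _ _, ?_⟩
    · intro x hx
      rcases mem_insert.mp hx with rfl | hx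
      · exact hi
      · exact mem_of_mem_erase (mem_of_mem_erase (hT hx))
    · intro h
      rcases mem_insert.mp h with rfl | h
      · exact hij rfl
      · exact (mem_erase.mp (hT h)).1 rfl


open Finset in
theorem avg_identity {ι : Type*} [DecidableEq ι] (B : Finset ι) (a : ι → ι → ℝ) :
    ∑ S ∈ B.powerset, ∑ i ∈ S, ∑ j ∈ B \ S, a i j
      = 2 ^ (B.card - 2) * ∑ i ∈ B, ∑ j ∈ B \ {i}, a i j := by
  have step1 : ∀ S ∈ B.powerset, (∑ i ∈ S, ∑ j ∈ B \ S, a i j)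
      = ∑ i ∈ B, ∑ j ∈ B, if i ∈ S ∧ j ∉ S then a i j else 0 := by
    intro S hS
    rw [mem_powerset] at hS
    have h2 : B.filter (· ∈ S) = S := by
      rw [Finset.filter_mem_eq_inter, Finset.inter_eq_right.mpr hS]
    calc ∑ i ∈ S, ∑ j ∈ B \ S, a i j
        = ∑ i ∈ B.filter (· ∈ S), ∑ j ∈ B, if j ∉ S then a i j else 0 := by
          rw [h2]
          exact Finset.sum_congr rfl fun i _ => by
            rw [Finset.sdiff_eq_filter, Finset.sum_filter]
      _ = ∑ i ∈ B, if i ∈ S then (∑ j ∈ B, if j ∉ S then a i j else 0) else 0 :=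
          Finset.sum_filter _ _
      _ = ∑ i ∈ B, ∑ j ∈ B, if i ∈ S ∧ j ∉ S then a i j else 0 := by
          refine Finset.sum_congr rfl fun i _ => ?_
          by_cases hi : i ∈ S <;> simp [hi]
  rw [Finset.sum_congr rfl step1]
  rw [Finset.sum_comm]
  rw [Finset.sum_congr rfl fun i (_ : i ∈ B) => Finset.sum_comm]
  rw [Finset.mul_sum]
  refine Finset.sum_congr rfl fun i hi => ?_
  have inner : ∀ j, (∑ S ∈ B.powerset, if i ∈ S ∧ j ∉ S then a i j else 0)
      = ((B.powerset.filter fun S => i ∈ S ∧ j ∉ S).card : ℝ) * a i j := by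
    intro j
    rw [← Finset.sum_filter, Finset.sum_const, nsmul_eq_mul]
  rw [Finset.sum_congr rfl fun j _ => inner j]
  rw [Finset.sum_eq_sum_sdiff_singleton_add hi
    (fun j => ((B.powerset.filter fun S => i ∈ S ∧ j ∉ S).card : ℝ) * a i j)]
  have hterm : ((B.powerset.filter fun S => i ∈ S ∧ i ∉ S).card : ℝ) * a i i = 0 := by
    have h0 : ∀ S ∈ B.powerset, ¬(i ∈ S ∧ i ∉ S) := fun S _ h => h.2 h.1
    rw [Finset.filter_false_of_mem h0]
    simp
  rw [hterm, add_zero, Finset.mul_sum]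
  refine Finset.sum_congr rfl fun j hj => ?_
  obtain ⟨hjB, hji⟩ := Finset.mem_sdiff.mp hj
  have hij : i ≠ j := fun h => hji (Finset.mem_singleton.mpr h.symm)
  rw [count_lemma B hi hjB hij]
  push_cast
  ring


/-- There is a universal constant `c > 0` such that for any `κ`-friendly
dataset `X₁, …, Xₙ ∈ ℝ^d` and any subset `B′ ⊆ {1, …, n}` of size `k ≤ εn`,
`|‖Σ_{i∈B′} Xᵢ‖² − k·d| ≤ c·κ·k·(√(εnd) + εn)`. -/
theorem norm_sum_bound : ∃ c : ℝ, 0 < c ∧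
    ∀ (d n : ℕ) (ε κ : ℝ) (X : Fin n → EuclideanSpace ℝ (Fin d)),
      0 < ε → ε ≤ 1 → 0 < κ → Friendly d n ε κ X →
      ∀ B' : Finset (Fin n), (B'.card : ℝ) ≤ ε * n →
        |‖∑ i ∈ B', X i‖ ^ 2 - (B'.card : ℝ) * d| ≤
          c * κ * B'.card * (Real.sqrt (ε * n * d) + ε * n) := by
  refine ⟨3, by norm_num, ?_⟩
  intro d n ε κ X hε hε1 hκ hF B hB
  obtain ⟨h1, h2, h3⟩ := hF
  set M := Real.sqrt (ε * n * d) + ε * n with hM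
  have hεn0 : (0:ℝ) ≤ ε * n := mul_nonneg hε.le (Nat.cast_nonneg n)
  have hMnn : 0 ≤ M := add_nonneg (Real.sqrt_nonneg _) hεn0
  rcases Nat.eq_zero_or_pos B.card with hk0 | hkpos
  · rw [Finset.card_eq_zero.mp hk0]
    simp
  have hk1 : (1:ℝ) ≤ (B.card : ℝ) := by exact_mod_cast hkpos
  have hεn1 : (1:ℝ) ≤ ε * n := le_trans hk1 hB
  have hd_le : Real.sqrt d ≤ M := by
    have : Real.sqrt d ≤ Real.sqrt (ε * n * d) := by
      apply Real.sqrt_le_sqrt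
      nlinarith [(Nat.cast_nonneg d : (0:ℝ) ≤ d)]
    exact le_trans this (le_add_of_nonneg_right hεn0)
  -- expansion
  have expand : ‖∑ i ∈ B, X i‖ ^ 2
      = (∑ i ∈ B, ‖X i‖ ^ 2) + ∑ i ∈ B, ∑ j ∈ B \ {i}, ⟪X i, X j⟫ := by
    rw [← real_inner_self_eq_norm_sq, sum_inner, ← Finset.sum_add_distrib]
    refine Finset.sum_congr rfl fun i hi => ?_
    rw [inner_sum, Finset.sum_eq_sum_sdiff_singleton_add hi, real_inner_self_eq_norm_sq]
    ring
  -- diagonal bound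
  have diag : |(∑ i ∈ B, ‖X i‖ ^ 2) - B.card * d| ≤ B.card * (κ * Real.sqrt d) := by
    have e : (∑ i ∈ B, ‖X i‖ ^ 2) - B.card * d = ∑ i ∈ B, (‖X i‖ ^ 2 - d) := by
      rw [Finset.sum_sub_distrib, Finset.sum_const, nsmul_eq_mul]
    rw [e]
    calc |∑ i ∈ B, (‖X i‖ ^ 2 - (d:ℝ))| ≤ ∑ i ∈ B, |‖X i‖ ^ 2 - (d:ℝ)| :=
          Finset.abs_sum_le_sum_abs _ _
      _ ≤ ∑ i ∈ B, κ * Real.sqrt d := Finset.sum_le_sum fun i _ => h3 i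
      _ = B.card * (κ * Real.sqrt d) := by rw [Finset.sum_const, nsmul_eq_mul]
  -- cross term bound
  have cross : |∑ i ∈ B, ∑ j ∈ B \ {i}, ⟪X i, X j⟫| ≤ 2 * κ * B.card * M := by
    rcases eq_or_lt_of_le (show 1 ≤ B.card from hkpos) with h1k | h2k
    · obtain ⟨i, hBi⟩ := Finset.card_eq_one.mp h1k.symm
      rw [hBi]
      simp
      positivity
    · have hid := avg_identity B (fun i j => ⟪X i, X j⟫)
      have hterm : ∀ S ∈ B.powerset, |∑ i ∈ S, ∑ j ∈ B \ S, ⟪X i, X j⟫|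
          ≤ κ * ((B.card : ℝ) / 2 * M) := by
        intro S hS
        rw [Finset.mem_powerset] at hS
        have e : ⟪∑ i ∈ S, X i, ∑ j ∈ B \ S, X j⟫ = ∑ i ∈ S, ∑ j ∈ B \ S, ⟪X i, X j⟫ := by
          rw [sum_inner]
          exact Finset.sum_congr rfl fun i _ => inner_sum _ _ _
        rw [← e]
        have hcards : (S.card : ℝ) + ((B \ S).card : ℝ) = B.card := by
          have := Finset.card_sdiff_add_card_eq_card hS
          push_cast [← this]
          ring
        have hsq : Real.sqrt ((S.card : ℝ) * ((B \ S).card : ℝ)) ≤ (B.card : ℝ) / 2 := by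
          have h4 : (S.card : ℝ) * ((B \ S).card : ℝ) ≤ ((B.card : ℝ) / 2) ^ 2 := by
            nlinarith [sq_nonneg ((S.card : ℝ) - ((B \ S).card : ℝ))]
          calc Real.sqrt ((S.card : ℝ) * ((B \ S).card : ℝ))
              ≤ Real.sqrt (((B.card : ℝ) / 2) ^ 2) := Real.sqrt_le_sqrt h4
            _ = (B.card : ℝ) / 2 := Real.sqrt_sq (by positivity)
        have hmax : max (Real.sqrt (ε * n * d)) (ε * n) ≤ M :=
          max_le (le_add_of_nonneg_right hεn0) (le_add_of_nonneg_left (Real.sqrt_nonneg _))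
        have hmax0 : (0:ℝ) ≤ max (Real.sqrt (ε * n * d)) (ε * n) :=
          le_trans hεn0 (le_max_right _ _)
        have hb := h1 S (B \ S) Finset.disjoint_sdiff
          (le_trans (by exact_mod_cast Finset.card_le_card hS) hB)
          (le_trans (by exact_mod_cast Finset.card_le_card Finset.sdiff_subset) hB)
        refine le_trans hb ?_
        apply mul_le_mul_of_nonneg_left _ hκ.le
        exact mul_le_mul hsq hmax hmax0 (by positivity)
      have hsum : |∑ S ∈ B.powerset, ∑ i ∈ S, ∑ j ∈ B \ S, ⟪X i, X j⟫|
          ≤ 2 ^ B.card * (κ * ((B.card : ℝ) / 2 * M)) := by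
        calc |∑ S ∈ B.powerset, ∑ i ∈ S, ∑ j ∈ B \ S, ⟪X i, X j⟫|
            ≤ ∑ S ∈ B.powerset, |∑ i ∈ S, ∑ j ∈ B \ S, ⟪X i, X j⟫| :=
              Finset.abs_sum_le_sum_abs _ _
          _ ≤ ∑ S ∈ B.powerset, κ * ((B.card : ℝ) / 2 * M) := Finset.sum_le_sum hterm
          _ = (B.powerset.card : ℝ) * (κ * ((B.card : ℝ) / 2 * M)) := by
              rw [Finset.sum_const, nsmul_eq_mul]
          _ = 2 ^ B.card * (κ * ((B.card : ℝ) / 2 * M)) := by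
              rw [Finset.card_powerset]; push_cast; ring
      rw [hid, abs_mul, abs_of_nonneg (by positivity : (0:ℝ) ≤ 2 ^ (B.card - 2))] at hsum
      have hpow : (2:ℝ) ^ B.card = 2 ^ (B.card - 2) * 4 := by
        have hc : B.card = (B.card - 2) + 2 := by omega
        nth_rewrite 1 [hc]
        rw [pow_add]; norm_num
      rw [hpow] at hsum
      have h2pos : (0:ℝ) < 2 ^ (B.card - 2) := by positivity
      have hfin : |∑ i ∈ B, ∑ j ∈ B \ {i}, ⟪X i, X j⟫| ≤ 4 * (κ * ((B.card : ℝ) / 2 * M)) := by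
        have := (mul_le_mul_iff_right₀ h2pos).mp
          (by linarith : 2 ^ (B.card - 2) * |∑ i ∈ B, ∑ j ∈ B \ {i}, ⟪X i, X j⟫|
            ≤ 2 ^ (B.card - 2) * (4 * (κ * ((B.card : ℝ) / 2 * M))))
        exact this
      calc |∑ i ∈ B, ∑ j ∈ B \ {i}, ⟪X i, X j⟫| ≤ 4 * (κ * ((B.card : ℝ) / 2 * M)) := hfin
        _ = 2 * κ * B.card * M := by ring
  -- combine
  have esplit : ‖∑ i ∈ B, X i‖ ^ 2 - (B.card : ℝ) * d
      = ((∑ i ∈ B, ‖X i‖ ^ 2) - B.card * d) + ∑ i ∈ B, ∑ j ∈ B \ {i}, ⟪X i, X j⟫ := by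
    rw [expand]; ring
  rw [esplit]
  have hdiag' : (B.card : ℝ) * (κ * Real.sqrt d) ≤ (B.card : ℝ) * (κ * M) :=
    mul_le_mul_of_nonneg_left (mul_le_mul_of_nonneg_left hd_le hκ.le) (Nat.cast_nonneg _)
  calc |((∑ i ∈ B, ‖X i‖ ^ 2) - B.card * d) + ∑ i ∈ B, ∑ j ∈ B \ {i}, ⟪X i, X j⟫|
      ≤ |(∑ i ∈ B, ‖X i‖ ^ 2) - B.card * d| + |∑ i ∈ B, ∑ j ∈ B \ {i}, ⟪X i, X j⟫| :=
        abs_add_le _ _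
    _ ≤ (B.card : ℝ) * (κ * M) + 2 * κ * B.card * M := by linarith
    _ = 3 * κ * B.card * M := by ring
end

section
/- There is a universal constant c > 0 such that the following holds. Let X₁, …, Xₙ ∈ ℝ^d be κ-friendly (with corruption parameter ε), where εn ≤ d. Let B ⊆ {1, …, n} be any subset of size εn, and let R = Σ_{i∈B} X_i. Then for any subset B′ ⊆ B of size k ≤ εn, |Σ_{i∈B′} ⟨X_i, R⟩ − k·d| ≤ c·κ·εn·√(kd). -/
open scoped RealInnerProductSpace

theorem count_lemma_aux {α : Type*} [DecidableEq α] (A : Finset α) {i j : α}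
    (hi : i ∈ A) (hj : j ∈ A) (hij : i ≠ j) :
    ((A.powerset.filter fun S => i ∈ S ∧ j ∉ S)).card = 2 ^ (A.card - 2) := by
  have hcard : ((A.erase j).erase i).card = A.card - 2 := by
    rw [Finset.card_erase_of_mem (Finset.mem_erase.mpr ⟨hij, hi⟩), Finset.card_erase_of_mem hj]
    omega
  rw [← hcard, ← Finset.card_powerset]
  apply Finset.card_nbij' (fun S => S.erase i) (fun T => insert i T)
  · intro S hS
    simp only [Finset.mem_coe, Finset.mem_filter, Finset.mem_powerset] at hS
    obtain ⟨hSA, hiS, hjS⟩ := hS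
    simp only [Finset.mem_coe, Finset.mem_powerset]
    intro x hx
    simp only [Finset.mem_erase] at hx ⊢
    exact ⟨hx.1, fun h => hjS (h ▸ hx.2), hSA hx.2⟩
  · intro T hT
    simp only [Finset.mem_coe, Finset.mem_powerset] at hT
    simp only [Finset.mem_coe, Finset.mem_filter, Finset.mem_powerset]
    have hjT : j ∉ T := fun h => by
      have := hT h; simp only [Finset.mem_erase] at this; exact this.2.1 rfl
    refine ⟨?_, Finset.mem_insert_self _ _, ?_⟩
    · intro x hx
      rcases Finset.mem_insert.mp hx with h | h
      · exact h ▸ hi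
      · have := hT h; simp only [Finset.mem_erase] at this; exact this.2.2
    · intro h
      rcases Finset.mem_insert.mp h with h | h
      · exact hij h.symm
      · exact hjT h
  · intro S hS
    simp only [Finset.mem_coe, Finset.mem_filter, Finset.mem_powerset] at hS
    exact Finset.insert_erase hS.2.1
  · intro T hT
    simp only [Finset.mem_coe, Finset.mem_powerset] at hT
    apply Finset.erase_insert
    intro h
    have := hT h; simp only [Finset.mem_erase] at this; exact this.1 rfl

theorem decouple_aux {n d : ℕ} (X : Fin n → EuclideanSpace ℝ (Fin d)) (A : Finset (Fin n))
    (C : ℝ) (hC : 0 ≤ C)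
    (hbd : ∀ S ⊆ A, |⟪∑ i ∈ S, X i, ∑ j ∈ A \ S, X j⟫| ≤ C) :
    |∑ i ∈ A, ∑ j ∈ A.erase i, ⟪X i, X j⟫| ≤ 4 * C := by
  by_cases hA : A.card ≤ 1
  · interval_cases h : A.card
    · rw [Finset.card_eq_zero.mp h]
      simp; linarith
    · obtain ⟨a, ha⟩ := Finset.card_eq_one.mp h
      subst ha
      simp; linarith
  push_neg at hA
  set a : Fin n → Fin n → ℝ := fun i j => ⟪X i, X j⟫ with ha
  have key : ∑ S ∈ A.powerset, ⟪∑ i ∈ S, X i, ∑ j ∈ A \ S, X j⟫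
      = (2 ^ (A.card - 2) : ℕ) * ∑ i ∈ A, ∑ j ∈ A.erase i, a i j := by
    have step1 : ∀ S ∈ A.powerset, ⟪∑ i ∈ S, X i, ∑ j ∈ A \ S, X j⟫
        = ∑ i ∈ A, ∑ j ∈ A, if i ∈ S ∧ j ∉ S then a i j else 0 := by
      intro S hS
      rw [Finset.mem_powerset] at hS
      rw [sum_inner]
      have e1 : ∀ i, ⟪X i, ∑ j ∈ A \ S, X j⟫ = ∑ j ∈ A, if j ∉ S then a i j else 0 := by
        intro i
        rw [inner_sum, Finset.sdiff_eq_filter, Finset.sum_filter]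
      have e2 : ∑ i ∈ S, ∑ j ∈ A, (if j ∉ S then a i j else 0)
          = ∑ i ∈ A, if i ∈ S then (∑ j ∈ A, if j ∉ S then a i j else 0) else 0 := by
        rw [← Finset.sum_filter]
        congr 1
        rw [Finset.filter_mem_eq_inter, Finset.inter_eq_right.mpr hS]
      calc ∑ i ∈ S, ⟪X i, ∑ j ∈ A \ S, X j⟫
          = ∑ i ∈ S, ∑ j ∈ A, (if j ∉ S then a i j else 0) :=
            Finset.sum_congr rfl fun i _ => e1 i
        _ = ∑ i ∈ A, if i ∈ S then (∑ j ∈ A, if j ∉ S then a i j else 0) else 0 := e2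
        _ = ∑ i ∈ A, ∑ j ∈ A, if i ∈ S ∧ j ∉ S then a i j else 0 := by
            refine Finset.sum_congr rfl fun i _ => ?_
            split_ifs with h <;> simp [h]
    have step2 : ∀ i ∈ A, ∀ j ∈ A, (∑ S ∈ A.powerset, if i ∈ S ∧ j ∉ S then a i j else 0)
        = (if j = i then 0 else ((2 ^ (A.card - 2) : ℕ) : ℝ) * a i j) := by
      intro i hi j hj
      rw [← Finset.sum_filter, Finset.sum_const, nsmul_eq_mul]
      by_cases h : j = i
      · subst h
        have : A.powerset.filter (fun S => j ∈ S ∧ j ∉ S) = ∅ :=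
          Finset.filter_false_of_mem (fun S _ => by tauto)
        simp [this]
      · rw [count_lemma_aux A hi hj (fun e => h e.symm)]
        simp [h]
    calc ∑ S ∈ A.powerset, ⟪∑ i ∈ S, X i, ∑ j ∈ A \ S, X j⟫
        = ∑ S ∈ A.powerset, ∑ i ∈ A, ∑ j ∈ A, (if i ∈ S ∧ j ∉ S then a i j else 0) :=
          Finset.sum_congr rfl step1
      _ = ∑ i ∈ A, ∑ j ∈ A, ∑ S ∈ A.powerset, (if i ∈ S ∧ j ∉ S then a i j else 0) := by
          rw [Finset.sum_comm]
          exact Finset.sum_congr rfl fun i _ => Finset.sum_comm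
      _ = ∑ i ∈ A, ∑ j ∈ A, (if j = i then 0 else ((2 ^ (A.card - 2) : ℕ) : ℝ) * a i j) :=
          Finset.sum_congr rfl fun i hi => Finset.sum_congr rfl fun j hj => step2 i hi j hj
      _ = ∑ i ∈ A, ∑ j ∈ A.erase i, ((2 ^ (A.card - 2) : ℕ) : ℝ) * a i j := by
          refine Finset.sum_congr rfl fun i _ => ?_
          rw [show A.erase i = A.filter (· ≠ i) from (Finset.filter_ne' A i).symm,
            Finset.sum_filter]
          exact Finset.sum_congr rfl fun j _ => by by_cases h : j = i <;> simp [h]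
      _ = ((2 ^ (A.card - 2) : ℕ) : ℝ) * ∑ i ∈ A, ∑ j ∈ A.erase i, a i j := by
          simp [Finset.mul_sum]
  have habs : |∑ S ∈ A.powerset, ⟪∑ i ∈ S, X i, ∑ j ∈ A \ S, X j⟫| ≤ (2 ^ A.card : ℕ) * C := by
    refine (Finset.abs_sum_le_sum_abs _ _).trans ?_
    calc ∑ S ∈ A.powerset, |⟪∑ i ∈ S, X i, ∑ j ∈ A \ S, X j⟫|
        ≤ A.powerset.card • C :=
          Finset.sum_le_card_nsmul _ _ C fun S hS => hbd S (Finset.mem_powerset.mp hS)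
      _ = (2 ^ A.card : ℕ) * C := by rw [Finset.card_powerset, nsmul_eq_mul]
  rw [key, abs_mul, abs_of_nonneg (by positivity : (0:ℝ) ≤ ((2 ^ (A.card - 2) : ℕ) : ℝ))] at habs
  have hpow : ((2 ^ A.card : ℕ) : ℝ) = ((2 ^ (A.card - 2) : ℕ) : ℝ) * 4 := by
    have : A.card = (A.card - 2) + 2 := by omega
    rw [this]
    push_cast [pow_add]
    ring
  rw [hpow] at habs
  have hpos : (0:ℝ) < ((2 ^ (A.card - 2) : ℕ) : ℝ) := by positivity
  calc |∑ i ∈ A, ∑ j ∈ A.erase i, ⟪X i, X j⟫|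
      = |∑ i ∈ A, ∑ j ∈ A.erase i, a i j| := rfl
    _ ≤ 4 * C := by
        rw [mul_comm (((2 ^ (A.card - 2) : ℕ) : ℝ)) 4] at habs
        exact le_of_mul_le_mul_right (by linarith [habs]) hpos

theorem sqrt_prod_aux {k m d : ℝ} (hk : 0 ≤ k) (hm : 0 ≤ m) :
    Real.sqrt (k * m) * Real.sqrt (m * d) = m * Real.sqrt (k * d) := by
  rw [← Real.sqrt_mul (by positivity), show k * m * (m * d) = m ^ 2 * (k * d) by ring,
    Real.sqrt_mul (by positivity), Real.sqrt_sq hm]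

/-- There is a universal constant `c > 0` such that for any `κ`-friendly
dataset `X₁, …, Xₙ ∈ ℝ^d` with `εn ≤ d`, any `B ⊆ {1, …, n}` of size `εn` with
`R = Σ_{i∈B} Xᵢ`, and any `B′ ⊆ B` of size `k`,
`|Σ_{i∈B′} ⟨Xᵢ, R⟩ − k·d| ≤ c·κ·εn·√(kd)`. -/
theorem null_bad_R_concentration : ∃ c : ℝ, 0 < c ∧
    ∀ (d n : ℕ) (ε κ : ℝ) (X : Fin n → EuclideanSpace ℝ (Fin d)),
      0 < ε → ε ≤ 1 → 0 < κ → Friendly d n ε κ X → ε * n ≤ d →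
      ∀ B : Finset (Fin n), (B.card : ℝ) = ε * n →
      ∀ B' : Finset (Fin n), B' ⊆ B →
        |(∑ i ∈ B', ⟪X i, ∑ j ∈ B, X j⟫) - (B'.card : ℝ) * d| ≤
          c * κ * (ε * n) * Real.sqrt (B'.card * d) := by
  refine ⟨6, by norm_num, ?_⟩
  intro d n ε κ X hε hε1 hκ hF hεd B hB B' hsub
  obtain ⟨h1, h2, h3⟩ := hF
  have hκ0 : (0:ℝ) ≤ κ := le_of_lt hκ
  by_cases hB'e : B' = ∅
  · rw [hB'e]
    simp
  -- setup
  have hk1 : 1 ≤ B'.card := Finset.card_pos.mpr (Finset.nonempty_of_ne_empty hB'e)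
  have hk0 : (0:ℝ) ≤ (B'.card : ℝ) := Nat.cast_nonneg _
  have hk1' : (1:ℝ) ≤ (B'.card : ℝ) := by exact_mod_cast hk1
  have hkm : (B'.card : ℝ) ≤ ε * n := by
    rw [← hB]; exact_mod_cast Finset.card_le_card hsub
  have hm0 : (0:ℝ) ≤ ε * n := le_trans (by norm_num) (hk1'.trans hkm)
  have hm1 : (1:ℝ) ≤ ε * n := hk1'.trans hkm
  have hd0 : (0:ℝ) ≤ (d:ℝ) := Nat.cast_nonneg _
  have hmax : max (Real.sqrt (ε * n * d)) (ε * n) = Real.sqrt (ε * n * d) := by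
    refine max_eq_left ?_
    calc ε * n = Real.sqrt ((ε * n) * (ε * n)) := (Real.sqrt_mul_self hm0).symm
      _ ≤ Real.sqrt (ε * n * d) := Real.sqrt_le_sqrt (mul_le_mul_of_nonneg_left hεd hm0)
  -- algebraic identity
  have E : ∑ i ∈ B', ⟪X i, ∑ j ∈ B, X j⟫
      = (∑ i ∈ B', ‖X i‖ ^ 2) + (∑ i ∈ B', ∑ j ∈ B'.erase i, ⟪X i, X j⟫)
        + ⟪∑ i ∈ B', X i, ∑ i ∈ B \ B', X i⟫ := by
    have hR : ∑ j ∈ B, X j = (∑ i ∈ B \ B', X i) + (∑ i ∈ B', X i) :=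
      (Finset.sum_sdiff hsub).symm
    rw [hR]
    have hadd : ∀ i ∈ B', ⟪X i, (∑ i ∈ B \ B', X i) + (∑ i ∈ B', X i)⟫
        = ⟪X i, ∑ i ∈ B \ B', X i⟫ + ⟪X i, ∑ i ∈ B', X i⟫ := fun i _ => inner_add_right _ _ _
    rw [Finset.sum_congr rfl hadd, Finset.sum_add_distrib, ← sum_inner]
    have huexp : ∑ i ∈ B', ⟪X i, ∑ j ∈ B', X j⟫
        = (∑ i ∈ B', ‖X i‖ ^ 2) + ∑ i ∈ B', ∑ j ∈ B'.erase i, ⟪X i, X j⟫ := by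
      rw [← Finset.sum_add_distrib]
      refine Finset.sum_congr rfl fun i hi => ?_
      rw [inner_sum, ← Finset.add_sum_erase B' _ hi, real_inner_self_eq_norm_sq]
    rw [huexp]
    ring
  rw [E]
  -- term 1
  have T1 : |(∑ i ∈ B', ‖X i‖ ^ 2) - (B'.card : ℝ) * d| ≤ (B'.card : ℝ) * (κ * Real.sqrt d) := by
    have e : (∑ i ∈ B', ‖X i‖ ^ 2) - (B'.card : ℝ) * d = ∑ i ∈ B', (‖X i‖ ^ 2 - (d:ℝ)) := by
      rw [Finset.sum_sub_distrib, Finset.sum_const, nsmul_eq_mul]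
    rw [e]
    refine (Finset.abs_sum_le_sum_abs _ _).trans ?_
    calc ∑ i ∈ B', |‖X i‖ ^ 2 - (d:ℝ)| ≤ B'.card • (κ * Real.sqrt d) :=
          Finset.sum_le_card_nsmul _ _ _ fun i _ => h3 i
      _ = (B'.card : ℝ) * (κ * Real.sqrt d) := by rw [nsmul_eq_mul]
  -- term 2 : decoupling
  have T2 : |∑ i ∈ B', ∑ j ∈ B'.erase i, ⟪X i, X j⟫|
      ≤ 4 * (κ * ((B'.card : ℝ) * Real.sqrt (ε * n * d))) := by
    refine decouple_aux X B' _ (by positivity) ?_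
    intro S hS
    have hScard : (S.card : ℝ) ≤ ε * n := by
      rw [← hB]; exact_mod_cast Finset.card_le_card (hS.trans hsub)
    have hTcard : ((B' \ S).card : ℝ) ≤ ε * n := by
      rw [← hB]
      exact_mod_cast Finset.card_le_card ((Finset.sdiff_subset).trans hsub)
    have hkey := h1 S (B' \ S) Finset.disjoint_sdiff hScard hTcard
    rw [hmax] at hkey
    refine hkey.trans ?_
    have hs1 : (S.card : ℝ) ≤ (B'.card : ℝ) := by
      exact_mod_cast Finset.card_le_card hS
    have hs2 : ((B' \ S).card : ℝ) ≤ (B'.card : ℝ) := by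
      exact_mod_cast Finset.card_le_card Finset.sdiff_subset
    have hsqrt : Real.sqrt ((S.card : ℝ) * ((B' \ S).card : ℝ)) ≤ (B'.card : ℝ) := by
      calc Real.sqrt ((S.card : ℝ) * ((B' \ S).card : ℝ))
          ≤ Real.sqrt ((B'.card : ℝ) * (B'.card : ℝ)) :=
            Real.sqrt_le_sqrt (mul_le_mul hs1 hs2 (Nat.cast_nonneg _) hk0)
        _ = (B'.card : ℝ) := Real.sqrt_mul_self hk0
    gcongr
  -- term 3 : cross term
  have T3 : |⟪∑ i ∈ B', X i, ∑ i ∈ B \ B', X i⟫|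
      ≤ κ * (Real.sqrt ((B'.card : ℝ) * (ε * n)) * Real.sqrt (ε * n * d)) := by
    have hTcard : (((B \ B').card : ℝ)) ≤ ε * n := by
      rw [← hB]; exact_mod_cast Finset.card_le_card Finset.sdiff_subset
    have hkey := h1 B' (B \ B') Finset.disjoint_sdiff hkm hTcard
    rw [hmax] at hkey
    refine hkey.trans ?_
    gcongr
  -- key square root inequalities
  have key1 : Real.sqrt ((B'.card : ℝ) * (ε * n)) * Real.sqrt (ε * n * d)
      = (ε * n) * Real.sqrt ((B'.card : ℝ) * d) := sqrt_prod_aux hk0 hm0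
  have key2 : (B'.card : ℝ) * Real.sqrt (ε * n * d) ≤ (ε * n) * Real.sqrt ((B'.card : ℝ) * d) := by
    calc (B'.card : ℝ) * Real.sqrt (ε * n * d)
        = Real.sqrt ((B'.card : ℝ) * (B'.card : ℝ)) * Real.sqrt (ε * n * d) := by
          rw [Real.sqrt_mul_self hk0]
      _ ≤ Real.sqrt ((B'.card : ℝ) * (ε * n)) * Real.sqrt (ε * n * d) :=
          mul_le_mul_of_nonneg_right
            (Real.sqrt_le_sqrt (mul_le_mul_of_nonneg_left hkm hk0)) (Real.sqrt_nonneg _)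
      _ = (ε * n) * Real.sqrt ((B'.card : ℝ) * d) := key1
  have key3 : (B'.card : ℝ) * Real.sqrt d ≤ (ε * n) * Real.sqrt ((B'.card : ℝ) * d) := by
    have h1' : Real.sqrt (B'.card : ℝ) ≤ ε * n := by
      calc Real.sqrt (B'.card : ℝ) ≤ Real.sqrt ((ε * n) * (ε * n)) :=
            Real.sqrt_le_sqrt (hkm.trans (le_mul_of_one_le_left hm0 hm1))
        _ = ε * n := Real.sqrt_mul_self hm0
    calc (B'.card : ℝ) * Real.sqrt d
        = Real.sqrt (B'.card : ℝ) * (Real.sqrt (B'.card : ℝ) * Real.sqrt d) := by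
          rw [← mul_assoc, Real.mul_self_sqrt hk0]
      _ = Real.sqrt (B'.card : ℝ) * Real.sqrt ((B'.card : ℝ) * d) := by rw [Real.sqrt_mul hk0]
      _ ≤ (ε * n) * Real.sqrt ((B'.card : ℝ) * d) :=
          mul_le_mul_of_nonneg_right h1' (Real.sqrt_nonneg _)
  -- combine
  have split : |((∑ i ∈ B', ‖X i‖ ^ 2) + (∑ i ∈ B', ∑ j ∈ B'.erase i, ⟪X i, X j⟫)
        + ⟪∑ i ∈ B', X i, ∑ i ∈ B \ B', X i⟫) - (B'.card : ℝ) * d|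
      ≤ |(∑ i ∈ B', ‖X i‖ ^ 2) - (B'.card : ℝ) * d|
        + |∑ i ∈ B', ∑ j ∈ B'.erase i, ⟪X i, X j⟫|
        + |⟪∑ i ∈ B', X i, ∑ i ∈ B \ B', X i⟫| := by
    have e : ((∑ i ∈ B', ‖X i‖ ^ 2) + (∑ i ∈ B', ∑ j ∈ B'.erase i, ⟪X i, X j⟫)
        + ⟪∑ i ∈ B', X i, ∑ i ∈ B \ B', X i⟫) - (B'.card : ℝ) * d
        = ((∑ i ∈ B', ‖X i‖ ^ 2) - (B'.card : ℝ) * d)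
          + (∑ i ∈ B', ∑ j ∈ B'.erase i, ⟪X i, X j⟫)
          + ⟪∑ i ∈ B', X i, ∑ i ∈ B \ B', X i⟫ := by ring
    rw [e]
    exact (abs_add_le _ _).trans (add_le_add_left (abs_add_le _ _) _)
  have b1 : (B'.card : ℝ) * (κ * Real.sqrt d) ≤ κ * ((ε * n) * Real.sqrt ((B'.card : ℝ) * d)) := by
    calc (B'.card : ℝ) * (κ * Real.sqrt d) = κ * ((B'.card : ℝ) * Real.sqrt d) := by ring
      _ ≤ κ * ((ε * n) * Real.sqrt ((B'.card : ℝ) * d)) :=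
          mul_le_mul_of_nonneg_left key3 hκ0
  have b2 : 4 * (κ * ((B'.card : ℝ) * Real.sqrt (ε * n * d)))
      ≤ 4 * (κ * ((ε * n) * Real.sqrt ((B'.card : ℝ) * d))) := by
    have := mul_le_mul_of_nonneg_left key2 hκ0
    linarith
  have b3 : κ * (Real.sqrt ((B'.card : ℝ) * (ε * n)) * Real.sqrt (ε * n * d))
      = κ * ((ε * n) * Real.sqrt ((B'.card : ℝ) * d)) := by rw [key1]
  have total := split.trans (add_le_add (add_le_add T1 T2) T3)
  calc |((∑ i ∈ B', ‖X i‖ ^ 2) + (∑ i ∈ B', ∑ j ∈ B'.erase i, ⟪X i, X j⟫)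
        + ⟪∑ i ∈ B', X i, ∑ i ∈ B \ B', X i⟫) - (B'.card : ℝ) * d|
      ≤ (B'.card : ℝ) * (κ * Real.sqrt d)
        + 4 * (κ * ((B'.card : ℝ) * Real.sqrt (ε * n * d)))
        + κ * (Real.sqrt ((B'.card : ℝ) * (ε * n)) * Real.sqrt (ε * n * d)) := total
    _ ≤ 6 * κ * (ε * n) * Real.sqrt ((B'.card : ℝ) * d) := by linarith [b1, b2, b3.le]
end
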